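/- arXiv:2510.01901 — 3 statements merged into one kernel-verified Lean document; each statement's English description precedes it below -/
import Mathlib

section
/- Let K = (R_{0:n-1}, K_{0:n-1}) be a knotset compatible with a Feynman–Kac model M = (M_{0:n}, G_{0:n}). Then the knot-model K ∗ M = (M*_{0:n}, G*_{0:n}) satisfies M*_0 = R_0 and G*_0 = K_0(G_0); M*_p = K_{p-1}^{G_{p-1}} R_p and G*_p = K_p(G_p) for p ∈ {1,…,n−1}; and M*_n = K_{n-1}^{G_{n-1}} M_n and G*_n = G_n. -/
open MeasureTheory
open scoped ENNReal

noncomputable section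

namespace KnotsPaper

variable {α β γ : Type*}

/-- Composition of measure-valued maps ("kernels"): `(L K)(x,·) = ∫ L(x,dy) K(y,·)`. -/
def kcomp [MeasurableSpace β] [MeasurableSpace γ]
    (L : α → Measure β) (K : β → Measure γ) : α → Measure γ :=
  fun x => (L x).bind K

/-- A kernel applied to a nonnegative function: `K(H)(x) = ∫ H(y) K(x,dy)`. -/
def kap [MeasurableSpace β] (K : α → Measure β) (H : β → ℝ≥0∞) : α → ℝ≥0∞ :=
  fun x => ∫⁻ y, H y ∂(K x)

/-- Twisted kernel `K^H`: `K^H(x,dy) = K(x,dy)H(y)/K(H)(x)` when `K(H)(x) > 0`,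
and `K(x,·)` when `K(H)(x) = 0`. -/
def twist [MeasurableSpace β] (K : α → Measure β) (H : β → ℝ≥0∞) : α → Measure β :=
  fun x => if kap K H x = 0 then K x else (kap K H x)⁻¹ • (K x).withDensity H

/-- Markov kernel property for a measure-valued map. -/
def IsKernel [MeasurableSpace α] [MeasurableSpace β] (K : α → Measure β) : Prop :=
  Measurable K ∧ ∀ x, IsProbabilityMeasure (K x)

/-- Conditional variance `Var_K(f)(x) = K(f²)(x) − (K(f)(x))²` (real-valued). -/
def varK [MeasurableSpace β] (K : α → Measure β) (f : β → ℝ) : α → ℝ :=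
  fun x => (∫ y, (f y) ^ 2 ∂(K x)) - (∫ y, f y ∂(K x)) ^ 2

/-- Conditional variance `Var_K(f)(x) = K(f²)(x) − (K(f)(x))²` in `ℝ≥0∞`. -/
def varK' [MeasurableSpace β] (K : α → Measure β) (f : β → ℝ) : α → ℝ≥0∞ :=
  fun x => (∫⁻ y, ENNReal.ofReal ((f y) ^ 2) ∂(K x)) - ENNReal.ofReal ((∫ y, f y ∂(K x)) ^ 2)

/-- Conditional covariance `Cov_K(f,g)(x) = K(f·g)(x) − K(f)(x)·K(g)(x)`. -/
def covK [MeasurableSpace β] (K : α → Measure β) (f g : β → ℝ) : α → ℝ :=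
  fun x => (∫ y, f y * g y ∂(K x)) - (∫ y, f y ∂(K x)) * (∫ y, g y ∂(K x))

/-- Tensor product of kernels: `(U ⊗ W)(x, d[y,z]) = U(x,dy) W(y,dz)`. -/
def ktens [MeasurableSpace β] [MeasurableSpace γ]
    (U : α → Measure β) (W : β → Measure γ) : α → Measure (β × γ) :=
  fun x => (U x).bind (fun y => (W y).map (fun z => (y, z)))

variable {E : Type*} [MeasurableSpace E]

/-- A discrete-time (updated) Feynman--Kac model with horizon `n`:
an initial distribution `init`, Markov kernels `M p` (used for `p ∈ [1,n]`)
and potential functions `G p` (used for `p ∈ [0,n]`). -/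
structure FK (E : Type*) [MeasurableSpace E] (n : ℕ) where
  init : Measure E
  M : ℕ → E → Measure E
  G : ℕ → E → ℝ≥0∞

namespace FK

variable {n : ℕ}

/-- Regularity of a Feynman--Kac model: the initial distribution is a probability
measure, the `M p` are Markov kernels, and the potentials `G p` are measurable,
`[0,∞)`-valued and integrable with respect to `M p (x, ·)` for all `x` (resp. `init`). -/
def Reg (𝓜 : FK E n) : Prop :=
  IsProbabilityMeasure 𝓜.init ∧
  (∀ p, 1 ≤ p → p ≤ n → IsKernel (𝓜.M p)) ∧
  (∀ p, p ≤ n → Measurable (𝓜.G p)) ∧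
  (∀ p x, 𝓜.G p x ≠ ∞) ∧
  (∫⁻ x, 𝓜.G 0 x ∂𝓜.init) ≠ ∞ ∧
  (∀ p x, 1 ≤ p → p ≤ n → kap (𝓜.M p) (𝓜.G p) x ≠ ∞)

/-- Predictive measures `γ_p`. -/
def gamma (𝓜 : FK E n) : ℕ → Measure E
  | 0 => 𝓜.init
  | p + 1 => ((gamma 𝓜 p).withDensity (𝓜.G p)).bind (𝓜.M (p + 1))

/-- Updated measures `γ̂_p`. -/
def gammaHat (𝓜 : FK E n) (p : ℕ) : Measure E := (𝓜.gamma p).withDensity (𝓜.G p)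

/-- Normalised predictive measures `η_p`. -/
def eta (𝓜 : FK E n) (p : ℕ) : Measure E := ((𝓜.gamma p) Set.univ)⁻¹ • 𝓜.gamma p

/-- Normalised updated measures `η̂_p`. -/
def etaHat (𝓜 : FK E n) (p : ℕ) : Measure E := ((𝓜.gammaHat p) Set.univ)⁻¹ • 𝓜.gammaHat p

/-- The kernels `Q_{p,n}`: `Q_{n,n} = Id` and `Q_{p,n} = Q_{p+1} Q_{p+1,n}` where
`Q_{p+1}(x,dy) = G_p(x) M_{p+1}(x,dy)`. -/
def Qto (𝓜 : FK E n) (p : ℕ) : E → Measure E :=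
  if _h : n ≤ p then fun x => Measure.dirac x
  else fun x => ((𝓜.G p x) • (𝓜.M (p + 1) x)).bind (Qto 𝓜 (p + 1))
termination_by n - p
decreasing_by omega

/-- `Q_{p,n}(φ)`. -/
def Qf (𝓜 : FK E n) (p : ℕ) (φ : E → ℝ) : E → ℝ := fun x => ∫ y, φ y ∂(𝓜.Qto p x)

/-- The asymptotic variance terms
`v_{p,n}(φ) = γ_p(1) γ_p(Q_{p,n}(φ)²)/γ_n(1)² − η_n(φ)²` (valued in `[0,∞]`). -/
def v (𝓜 : FK E n) (p : ℕ) (φ : E → ℝ) : ℝ≥0∞ :=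
  𝓜.gamma p Set.univ * (∫⁻ x, ENNReal.ofReal ((𝓜.Qf p φ x) ^ 2) ∂(𝓜.gamma p))
      / (𝓜.gamma n Set.univ) ^ 2
    - ENNReal.ofReal ((∫ x, φ x ∂(𝓜.eta n)) ^ 2)

/-- The (predictive) asymptotic variance map `σ²(φ) = Σ_{p=0}^n v_{p,n}(φ)`. -/
def var (𝓜 : FK E n) (φ : E → ℝ) : ℝ≥0∞ := ∑ p ∈ Finset.range (n + 1), 𝓜.v p φ

/-- The updated asymptotic variance terms `v̂_{p,n}(φ) = v_{p,n}(G_n·φ)/η_n(G_n)²`. -/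
def vhat (𝓜 : FK E n) (p : ℕ) (φ : E → ℝ) : ℝ≥0∞ :=
  𝓜.v p (fun x => (𝓜.G n x).toReal * φ x)
    / ENNReal.ofReal ((∫ x, (𝓜.G n x).toReal ∂(𝓜.eta n)) ^ 2)

/-- The updated asymptotic variance map `σ̂²(φ)`. -/
def varHat (𝓜 : FK E n) (φ : E → ℝ) : ℝ≥0∞ := ∑ p ∈ Finset.range (n + 1), 𝓜.vhat p φ

/-- The class `F(M)` of relevant test functions for the predictive measure. -/
def memF (𝓜 : FK E n) (φ : E → ℝ) : Prop := Integrable φ (𝓜.eta n) ∧ 𝓜.var φ ≠ ∞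

/-- The class `F̂(M)` of relevant test functions for the updated measure. -/
def memFhat (𝓜 : FK E n) (φ : E → ℝ) : Prop := Integrable φ (𝓜.etaHat n) ∧ 𝓜.varHat φ ≠ ∞

end FK

/-- Application of a single knot `(t,R,K)` with `1 ≤ t < n` to a model:
`M*_t = R`, `G*_t = K(G_t)`, `M*_{t+1} = K^{G_t} M_{t+1}`, everything else unchanged. -/
def knotApply {n : ℕ} (t : ℕ) (R K : E → Measure E) (𝓜 : FK E n) : FK E n where
  init := 𝓜.init
  M := fun p =>
    if p = t then R
    else if p = t + 1 then kcomp (twist K (𝓜.G t)) (𝓜.M (t + 1))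
    else 𝓜.M p
  G := fun p => if p = t then kap K (𝓜.G t) else 𝓜.G p

/-- Application of a knot `(0,R₀,K)` at time `0` (where `R₀` is a probability measure):
`M*_0 = R₀`, `G*_0 = K(G_0)`, `M*_1 = K^{G_0} M_1`, everything else unchanged. -/
def knotApply0 {n : ℕ} (R0 : Measure E) (K : E → Measure E) (𝓜 : FK E n) : FK E n where
  init := R0
  M := fun p => if p = 1 then kcomp (twist K (𝓜.G 0)) (𝓜.M 1) else 𝓜.M p
  G := fun p => if p = 0 then kap K (𝓜.G 0) else 𝓜.G p

/-- A knotset `(R_{0:n-1}, K_{0:n-1})`: `n` knots `(p, R_p, K_p)`, `p ∈ [0,n-1]`,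
where `R_0` is a probability measure (recorded in `R0`). -/
structure Knotset (E : Type*) [MeasurableSpace E] (n : ℕ) where
  R0 : Measure E
  R : ℕ → E → Measure E
  K : ℕ → E → Measure E

namespace Knotset

variable {n : ℕ}

/-- Regularity of a knotset: its constituents are (probability) Markov kernels. -/
def Reg (𝓚 : Knotset E n) : Prop :=
  IsProbabilityMeasure 𝓚.R0 ∧
  (∀ p, 1 ≤ p → p < n → IsKernel (𝓚.R p)) ∧
  (∀ p, p < n → IsKernel (𝓚.K p))

/-- Compatibility of a knotset with a model: `R_p K_p = M_p` for every `p ∈ [0,n-1]`. -/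
def Compat (𝓚 : Knotset E n) (𝓜 : FK E n) : Prop :=
  𝓚.R0.bind (𝓚.K 0) = 𝓜.init ∧
  ∀ p, 1 ≤ p → p < n → kcomp (𝓚.R p) (𝓚.K p) = 𝓜.M p

/-- The knot-model `K ∗ M` in closed form:
`M*_0 = R_0`, `G*_0 = K_0(G_0)`, `M*_p = K_{p-1}^{G_{p-1}} R_p`, `G*_p = K_p(G_p)` for
`p ∈ [1,n-1]`, `M*_n = K_{n-1}^{G_{n-1}} M_n` and `G*_n = G_n`. -/
def apply (𝓚 : Knotset E n) (𝓜 : FK E n) : FK E n where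
  init := 𝓚.R0
  M := fun p =>
    if p = 0 then 𝓜.M 0
    else if p < n then kcomp (twist (𝓚.K (p - 1)) (𝓜.G (p - 1))) (𝓚.R p)
    else if p = n then kcomp (twist (𝓚.K (n - 1)) (𝓜.G (n - 1))) (𝓜.M n)
    else 𝓜.M p
  G := fun p => if p < n then kap (𝓚.K p) (𝓜.G p) else 𝓜.G p

/-- The sequential application `K_t ∗ K_{t+1} ∗ ⋯ ∗ K_{n-1} ∗ M` of the knots of a
knotset at times `t, t+1, ..., n-1` (in descending time order), for `1 ≤ t`. -/
def applyFrom (𝓚 : Knotset E n) (𝓜 : FK E n) (t : ℕ) : FK E n :=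
  if _h : t < n then knotApply t (𝓚.R t) (𝓚.K t) (applyFrom 𝓚 𝓜 (t + 1))
  else 𝓜
termination_by n - t
decreasing_by omega

/-- The knotset operator defined as the sequential application
`K ∗ M = K_0 ∗ K_1 ∗ ⋯ ∗ K_{n-1} ∗ M` of its knots in descending time order. -/
def seqApply (𝓚 : Knotset E n) (𝓜 : FK E n) : FK E n :=
  knotApply0 𝓚.R0 (𝓚.K 0) (𝓚.applyFrom 𝓜 1)

end Knotset

/-- One application of a compatible knotset. -/
def KnotStep {n : ℕ} (𝓜' 𝓜 : FK E n) : Prop :=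
  ∃ 𝓚 : Knotset E n, 𝓚.Reg ∧ 𝓚.Compat 𝓜 ∧ 𝓜' = 𝓚.apply 𝓜

/-- The partial order on Feynman--Kac models induced by knotsets:
`M* ≼ M` iff `M* = K_m ∗ ⋯ ∗ K_1 ∗ M` for some finite sequence of compatible knotsets. -/
def KnotOrder {n : ℕ} (𝓜' 𝓜 : FK E n) : Prop :=
  Relation.TransGen KnotStep 𝓜' 𝓜

/-- The adapted knotset for a model `M`: the knot at time `p ≥ 1` is `(p, Id, M_p)`
and the knot at time `0` is `(0, δ_{x₀}, K_0)` with `K_0(x₀,·) = M_0`. -/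
def IsAdaptedKnotset {n : ℕ} (𝓚 : Knotset E n) (𝓜 : FK E n) : Prop :=
  (∃ x₀ : E, 𝓚.R0 = Measure.dirac x₀ ∧ 𝓚.K 0 x₀ = 𝓜.init) ∧
  (∀ p, 1 ≤ p → p < n →
    𝓚.R p = (fun x => Measure.dirac x) ∧ 𝓚.K p = 𝓜.M p)

/-- A Feynman--Kac model with horizon `n ≥ 1` whose terminal state space is the
product `E × E` (as arises from a `φ`-extension): terminal Markov kernel `Mn` and
terminal potential `Gn` are defined on the product space. -/
structure FKx (E : Type*) [MeasurableSpace E] (n : ℕ) where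
  init : Measure E
  M : ℕ → E → Measure E
  Mn : E → Measure (E × E)
  G : ℕ → E → ℝ≥0∞
  Gn : E × E → ℝ≥0∞

namespace FKx

variable {n : ℕ}

/-- Predictive measures `γ_p` for `p ≤ n-1`. -/
def gamma (𝓝 : FKx E n) : ℕ → Measure E
  | 0 => 𝓝.init
  | p + 1 => ((gamma 𝓝 p).withDensity (𝓝.G p)).bind (𝓝.M (p + 1))

/-- Updated measures `γ̂_p` for `p ≤ n-1`. -/
def gammaHat (𝓝 : FKx E n) (p : ℕ) : Measure E := (𝓝.gamma p).withDensity (𝓝.G p)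

/-- Normalised predictive measures `η_p` for `p ≤ n-1`. -/
def eta (𝓝 : FKx E n) (p : ℕ) : Measure E := ((𝓝.gamma p) Set.univ)⁻¹ • 𝓝.gamma p

/-- Normalised updated measures `η̂_p` for `p ≤ n-1`. -/
def etaHat (𝓝 : FKx E n) (p : ℕ) : Measure E := ((𝓝.gammaHat p) Set.univ)⁻¹ • 𝓝.gammaHat p

/-- Terminal predictive measure `γ_n` (on the product space). -/
def gammaN (𝓝 : FKx E n) : Measure (E × E) := (𝓝.gammaHat (n - 1)).bind 𝓝.Mn

/-- Terminal updated measure `γ̂_n`. -/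
def gammaHatN (𝓝 : FKx E n) : Measure (E × E) := 𝓝.gammaN.withDensity 𝓝.Gn

/-- Terminal normalised predictive measure `η_n`. -/
def etaN (𝓝 : FKx E n) : Measure (E × E) := (𝓝.gammaN Set.univ)⁻¹ • 𝓝.gammaN

/-- Terminal normalised updated measure `η̂_n`. -/
def etaHatN (𝓝 : FKx E n) : Measure (E × E) := (𝓝.gammaHatN Set.univ)⁻¹ • 𝓝.gammaHatN

/-- Kernels `Q_{p,n}` (into the terminal product space), for `p ≤ n-1`. -/
def Qto (𝓝 : FKx E n) (p : ℕ) : E → Measure (E × E) :=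
  if _h : n - 1 ≤ p then fun x => (𝓝.G (n - 1) x) • (𝓝.Mn x)
  else fun x => ((𝓝.G p x) • (𝓝.M (p + 1) x)).bind (Qto 𝓝 (p + 1))
termination_by n - 1 - p
decreasing_by omega

/-- `Q_{p,n}(φ)` for `p ≤ n-1`. -/
def Qf (𝓝 : FKx E n) (p : ℕ) (φ : E × E → ℝ) : E → ℝ := fun x => ∫ z, φ z ∂(𝓝.Qto p x)

/-- Asymptotic variance terms `v_{p,n}(φ)` (with `Q_{n,n} = Id`). -/
def v (𝓝 : FKx E n) (p : ℕ) (φ : E × E → ℝ) : ℝ≥0∞ :=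
  if p = n then
    𝓝.gammaN Set.univ * (∫⁻ z, ENNReal.ofReal ((φ z) ^ 2) ∂𝓝.gammaN)
        / (𝓝.gammaN Set.univ) ^ 2
      - ENNReal.ofReal ((∫ z, φ z ∂𝓝.etaN) ^ 2)
  else
    𝓝.gamma p Set.univ * (∫⁻ x, ENNReal.ofReal ((𝓝.Qf p φ x) ^ 2) ∂(𝓝.gamma p))
        / (𝓝.gammaN Set.univ) ^ 2
      - ENNReal.ofReal ((∫ z, φ z ∂𝓝.etaN) ^ 2)

/-- Updated asymptotic variance terms `v̂_{p,n}(φ) = v_{p,n}(G_n·φ)/η_n(G_n)²`. -/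
def vhat (𝓝 : FKx E n) (p : ℕ) (φ : E × E → ℝ) : ℝ≥0∞ :=
  𝓝.v p (fun z => (𝓝.Gn z).toReal * φ z)
    / ENNReal.ofReal ((∫ z, (𝓝.Gn z).toReal ∂𝓝.etaN) ^ 2)

/-- Updated asymptotic variance map `σ̂²(φ)`. -/
def varHat (𝓝 : FKx E n) (φ : E × E → ℝ) : ℝ≥0∞ := ∑ p ∈ Finset.range (n + 1), 𝓝.vhat p φ

/-- The class `F̂` of relevant test functions for the updated terminal measure. -/
def memFhat (𝓝 : FKx E n) (φ : E × E → ℝ) : Prop :=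
  Integrable φ 𝓝.etaHatN ∧ 𝓝.varHat φ ≠ ∞

end FKx

/-- The `φ`-extended model `M^φ` of a model `M`: the terminal kernel becomes
`M_n ⊗ Id` and the terminal potential becomes `(G_n·φ) ⊗ φ^{-1}`. -/
def FK.ext {n : ℕ} (𝓜 : FK E n) (φ : E → ℝ) : FKx E n where
  init := 𝓜.init
  M := 𝓜.M
  Mn := fun x => (𝓜.M n x).map (fun y => (y, y))
  G := 𝓜.G
  Gn := fun z => 𝓜.G n z.1 * ENNReal.ofReal (φ z.1) * (ENNReal.ofReal (φ z.2))⁻¹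

/-- Application of a standard knot `(t,R,K)`, `1 ≤ t < n`, to an extended model. -/
def knotApplyX {n : ℕ} (t : ℕ) (R K : E → Measure E) (𝓝 : FKx E n) : FKx E n where
  init := 𝓝.init
  M := fun p =>
    if p = t then R
    else if p = t + 1 then kcomp (twist K (𝓝.G t)) (𝓝.M (t + 1))
    else 𝓝.M p
  Mn := if t + 1 = n then kcomp (twist K (𝓝.G t)) 𝓝.Mn else 𝓝.Mn
  G := fun p => if p = t then kap K (𝓝.G t) else 𝓝.G p
  Gn := 𝓝.Gn

/-- Application of a standard knot `(0,R₀,K)` at time `0` to an extended model. -/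
def knotApplyX0 {n : ℕ} (R0 : Measure E) (K : E → Measure E) (𝓝 : FKx E n) : FKx E n where
  init := R0
  M := fun p => if p = 1 then kcomp (twist K (𝓝.G 0)) (𝓝.M 1) else 𝓝.M p
  Mn := if n = 1 then kcomp (twist K (𝓝.G 0)) 𝓝.Mn else 𝓝.Mn
  G := fun p => if p = 0 then kap K (𝓝.G 0) else 𝓝.G p
  Gn := 𝓝.Gn

/-- Application of a terminal knot `(n,R,K)` to an extended model, written with
respect to the decomposition `M_n = P_1 ⊗ P_2`, `G_n = H ⊗ φ^{-1}` (with `P_1 = RK`):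
`M*_n = R ⊗ K^H P_2` and `G*_n = K(H) ⊗ φ^{-1}`, all other components unchanged. -/
def termKnotApply {n : ℕ} (R K P2 : E → Measure E) (H : E → ℝ≥0∞) (φ : E → ℝ)
    (𝓝 : FKx E n) : FKx E n where
  init := 𝓝.init
  M := 𝓝.M
  Mn := ktens R (kcomp (twist K H) P2)
  G := 𝓝.G
  Gn := fun z => kap K H z.1 * (ENNReal.ofReal (φ z.2))⁻¹

/-- Terminal-knot model-compatibility of an extended model w.r.t. a reference
terminal potential `Gref` and target function `φ`: `M_n = U ⊗ V^{G_n·φ}` and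
`G_n = V(G_n·φ) ⊗ φ^{-1}` for some Markov kernels `U`, `V`. -/
def TermCompatible {n : ℕ} (𝓝 : FKx E n) (Gref : E → ℝ≥0∞) (φ : E → ℝ) : Prop :=
  ∃ U V : E → Measure E, IsKernel U ∧ IsKernel V ∧
    𝓝.Mn = ktens U (twist V (fun y => Gref y * ENNReal.ofReal (φ y))) ∧
    𝓝.Gn = fun z =>
      kap V (fun y => Gref y * ENNReal.ofReal (φ y)) z.1 * (ENNReal.ofReal (φ z.2))⁻¹

/-- One application of a (standard or terminal) knot to an extended model, relative to
a reference terminal potential `Gref` and target function `φ`. -/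
def XStep {n : ℕ} (Gref : E → ℝ≥0∞) (φ : E → ℝ) (𝓝' 𝓝 : FKx E n) : Prop :=
  (∃ (R0 : Measure E) (K : E → Measure E), IsProbabilityMeasure R0 ∧ IsKernel K ∧
      R0.bind K = 𝓝.init ∧ 𝓝' = knotApplyX0 R0 K 𝓝) ∨
  (∃ (t : ℕ) (R K : E → Measure E), 1 ≤ t ∧ t < n ∧ IsKernel R ∧ IsKernel K ∧
      kcomp R K = 𝓝.M t ∧ 𝓝' = knotApplyX t R K 𝓝) ∨
  (∃ R K U V : E → Measure E, IsKernel R ∧ IsKernel K ∧ IsKernel U ∧ IsKernel V ∧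
      𝓝.Mn = ktens U (twist V (fun y => Gref y * ENNReal.ofReal (φ y))) ∧
      𝓝.Gn = (fun z =>
        kap V (fun y => Gref y * ENNReal.ofReal (φ y)) z.1 * (ENNReal.ofReal (φ z.2))⁻¹) ∧
      kcomp R K = U ∧
      𝓝' = termKnotApply R K (twist V (fun y => Gref y * ENNReal.ofReal (φ y)))
              (kap V (fun y => Gref y * ENNReal.ofReal (φ y))) φ 𝓝)

/-- A finite (nonempty) sequence of (standard or terminal) knot applications. -/
def XChain {n : ℕ} (Gref : E → ℝ≥0∞) (φ : E → ℝ) : FKx E n → FKx E n → Prop :=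
  Relation.TransGen (XStep Gref φ)

/-- The partial order `M* ≼_φ M°` with respect to a reference model `M`:
`M*` is obtained from `M°` by knots, and `M°` is obtained from `M^φ` by knots. -/
def XOrder {n : ℕ} (𝓜 : FK E n) (φ : E → ℝ) (𝓝' 𝓝 : FKx E n) : Prop :=
  XChain (𝓜.G n) φ 𝓝' 𝓝 ∧ XChain (𝓜.G n) φ 𝓝 (𝓜.ext φ)

end KnotsPaper

namespace KnotsPaper

theorem applyFrom_G {E : Type*} [MeasurableSpace E] {n : ℕ}
    (KS : Knotset E n) (MO : FK E n) (t p : ℕ) :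
    (KS.applyFrom MO t).G p =
      if t ≤ p ∧ p < n then kap (KS.K p) (MO.G p) else MO.G p := by
  rw [Knotset.applyFrom]
  by_cases h : t < n
  · rw [dif_pos h]
    show (if p = t then kap (KS.K t) ((KS.applyFrom MO (t+1)).G t)
        else (KS.applyFrom MO (t+1)).G p) =
      if t ≤ p ∧ p < n then kap (KS.K p) (MO.G p) else MO.G p
    rw [applyFrom_G KS MO (t+1) t, applyFrom_G KS MO (t+1) p]
    split_ifs <;> (try subst_vars) <;> first | rfl | (exfalso; omega)
  · rw [dif_neg h]
    split_ifs <;> first | rfl | (exfalso; omega)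
termination_by n - t
decreasing_by all_goals omega

theorem applyFrom_M {E : Type*} [MeasurableSpace E] {n : ℕ}
    (KS : Knotset E n) (MO : FK E n) (t p : ℕ) :
    (KS.applyFrom MO t).M p =
      if p < t ∨ n < p then MO.M p
      else if p = t then (if t < n then KS.R t else MO.M p)
      else if p < n then kcomp (twist (KS.K (p-1)) (MO.G (p-1))) (KS.R p)
      else kcomp (twist (KS.K (n-1)) (MO.G (n-1))) (MO.M n) := by
  rw [Knotset.applyFrom]
  by_cases h : t < n
  · rw [dif_pos h]
    show (if p = t then KS.R t
        else if p = t + 1 then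
          kcomp (twist (KS.K t) ((KS.applyFrom MO (t+1)).G t)) ((KS.applyFrom MO (t+1)).M (t+1))
        else (KS.applyFrom MO (t+1)).M p) =
      if p < t ∨ n < p then MO.M p
      else if p = t then (if t < n then KS.R t else MO.M p)
      else if p < n then kcomp (twist (KS.K (p-1)) (MO.G (p-1))) (KS.R p)
      else kcomp (twist (KS.K (n-1)) (MO.G (n-1))) (MO.M n)
    rw [applyFrom_G KS MO (t+1) t, applyFrom_M KS MO (t+1) (t+1),
      applyFrom_M KS MO (t+1) p]
    split_ifs <;> (try subst_vars) <;>
      first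
      | rfl
      | (exfalso; omega)
      | simp
      | (rw [show n - 1 = t by omega]
         exact congrArg _ (congrArg MO.M (by omega : t + 1 = n)))
  · rw [dif_neg h]
    split_ifs <;> first | rfl | (exfalso; omega)
termination_by n - t
decreasing_by all_goals omega

/-- Proposition 3.1, knot-model closed form: applying the knots of a
compatible knotset in descending time order yields the model with
`M*_0 = R_0`, `G*_0 = K_0(G_0)`, `M*_p = K_{p-1}^{G_{p-1}} R_p`, `G*_p = K_p(G_p)` for
`p ∈ {1,…,n-1}`, `M*_n = K_{n-1}^{G_{n-1}} M_n` and `G*_n = G_n`. -/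
theorem statement0 {E : Type*} [MeasurableSpace E] {n : ℕ} (hn : 1 ≤ n)
    (𝓜 : FK E n) (𝓚 : Knotset E n)
    (h𝓜 : 𝓜.Reg) (h𝓚 : 𝓚.Reg) (hcompat : 𝓚.Compat 𝓜) :
    (𝓚.seqApply 𝓜).init = 𝓚.R0 ∧
    (𝓚.seqApply 𝓜).G 0 = kap (𝓚.K 0) (𝓜.G 0) ∧
    (∀ p, 1 ≤ p → p ≤ n - 1 →
      (𝓚.seqApply 𝓜).M p = kcomp (twist (𝓚.K (p - 1)) (𝓜.G (p - 1))) (𝓚.R p) ∧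
      (𝓚.seqApply 𝓜).G p = kap (𝓚.K p) (𝓜.G p)) ∧
    (𝓚.seqApply 𝓜).M n = kcomp (twist (𝓚.K (n - 1)) (𝓜.G (n - 1))) (𝓜.M n) ∧
    (𝓚.seqApply 𝓜).G n = 𝓜.G n := by
  refine ⟨rfl, ?_, ?_, ?_, ?_⟩
  · show kap (𝓚.K 0) ((𝓚.applyFrom 𝓜 1).G 0) = kap (𝓚.K 0) (𝓜.G 0)
    rw [applyFrom_G, if_neg (show ¬(1 ≤ 0 ∧ 0 < n) by omega)]
  · intro p hp1 hpn
    have hn2 : 2 ≤ n := by omega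
    constructor
    · show (if p = 1 then
          kcomp (twist (𝓚.K 0) ((𝓚.applyFrom 𝓜 1).G 0)) ((𝓚.applyFrom 𝓜 1).M 1)
        else (𝓚.applyFrom 𝓜 1).M p) = kcomp (twist (𝓚.K (p-1)) (𝓜.G (p-1))) (𝓚.R p)
      rw [applyFrom_G 𝓚 𝓜 1 0, applyFrom_M 𝓚 𝓜 1 1, applyFrom_M 𝓚 𝓜 1 p]
      split_ifs <;> (try subst_vars) <;> first | rfl | (exfalso; omega) | simp
    · show (if p = 0 then kap (𝓚.K 0) ((𝓚.applyFrom 𝓜 1).G 0)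
          else (𝓚.applyFrom 𝓜 1).G p) = kap (𝓚.K p) (𝓜.G p)
      rw [if_neg (show ¬ p = 0 by omega), applyFrom_G, if_pos (show 1 ≤ p ∧ p < n by omega)]
  · show (if n = 1 then
        kcomp (twist (𝓚.K 0) ((𝓚.applyFrom 𝓜 1).G 0)) ((𝓚.applyFrom 𝓜 1).M 1)
      else (𝓚.applyFrom 𝓜 1).M n) = kcomp (twist (𝓚.K (n-1)) (𝓜.G (n-1))) (𝓜.M n)
    rw [applyFrom_G 𝓚 𝓜 1 0, applyFrom_M 𝓚 𝓜 1 1, applyFrom_M 𝓚 𝓜 1 n]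
    split_ifs <;> (try subst_vars) <;> first | rfl | (exfalso; omega) | simp
  · show (if n = 0 then kap (𝓚.K 0) ((𝓚.applyFrom 𝓜 1).G 0)
        else (𝓚.applyFrom 𝓜 1).G n) = 𝓜.G n
    rw [if_neg (show ¬ n = 0 by omega), applyFrom_G, if_neg (show ¬(1 ≤ n ∧ n < n) by omega)]

end KnotsPaper
end
end

section
/- Let K = (R_{0:n-1}, K_{0:n-1}) be a knotset compatible with a Feynman–Kac model M, and let M* = K ∗ M with predictive marginal measures γ*_p. Then for every measurable φ: (1) γ*_0(φ) = R_0(φ) and γ*_p(φ) = (γ̂_{p-1} R_p)(φ) for p ∈ {1,…,n−1}; (2) (γ*_p K_p)(φ) = γ_p(φ) for p ∈ {0,…,n−1}, where γ_p and γ̂_p are the predictive and updated measures of M. -/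
open MeasureTheory
open scoped ENNReal

noncomputable section

namespace KnotsPaper

section Aux

variable {E : Type*} [MeasurableSpace E]

lemma measurable_kap {K : E → Measure E} {H : E → ℝ≥0∞}
    (hK : Measurable K) (hH : Measurable H) : Measurable (kap K H) :=
  (Measure.measurable_lintegral hH).comp hK

lemma measurable_twist {K : E → Measure E} {H : E → ℝ≥0∞}
    (hK : Measurable K) (hH : Measurable H) : Measurable (twist K H) := by
  unfold twist
  apply Measurable.ite ((measurable_kap hK hH) (measurableSet_singleton 0)) hK
  apply Measure.measurable_of_measurable_coe
  intro s hs
  have h1 : Measurable fun x => ((K x).withDensity H) s := by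
    simp_rw [withDensity_apply _ hs, ← lintegral_indicator hs]
    exact (Measure.measurable_lintegral (hH.indicator hs)).comp hK
  have h2 : Measurable fun b => (kap K H b)⁻¹ * ((K b).withDensity H) s :=
    (measurable_kap hK hH).inv.mul h1
  simpa only [Measure.smul_apply, smul_eq_mul] using h2

lemma measurable_kcomp {L K : E → Measure E}
    (hL : Measurable L) (hK : Measurable K) : Measurable (kcomp L K) :=
  (Measure.measurable_bind' hK).comp hL

lemma kap_kcomp {R K : E → Measure E} {H : E → ℝ≥0∞}
    (hK : Measurable K) (hH : Measurable H) (x : E) :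
    kap (kcomp R K) H x = ∫⁻ y, kap K H y ∂(R x) :=
  Measure.lintegral_bind hK.aemeasurable hH.aemeasurable

/-- The key "twist" identity:
`(μ·K(H)) K^H = (μK)·H` whenever `K(H) < ∞` `μ`-a.e. -/
lemma withDensity_kap_bind_twist {μ : Measure E} {K : E → Measure E} {H : E → ℝ≥0∞}
    (hK : Measurable K) (hH : Measurable H)
    (hae : ∀ᵐ x ∂μ, kap K H x ≠ ∞) :
    (μ.withDensity (kap K H)).bind (twist K H) = (μ.bind K).withDensity H := by
  ext s hs
  have ht : Measurable fun a => (twist K H a) s :=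
    (Measure.measurable_coe hs).comp (measurable_twist hK hH)
  rw [Measure.bind_apply hs (measurable_twist hK hH).aemeasurable,
    lintegral_withDensity_eq_lintegral_mul _ (measurable_kap hK hH) ht,
    withDensity_apply _ hs]
  simp_rw [← lintegral_indicator hs]
  rw [Measure.lintegral_bind hK.aemeasurable (hH.indicator hs).aemeasurable]
  refine lintegral_congr_ae (hae.mono fun x hx => ?_)
  simp only [Pi.mul_apply, twist]
  by_cases h0 : kap K H x = 0
  · rw [if_pos h0, h0, zero_mul]
    symm
    have hle : ∫⁻ y, s.indicator H y ∂(K x) ≤ kap K H x := by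
      refine lintegral_mono fun y => ?_
      by_cases hy : y ∈ s <;> simp [Set.indicator, hy]
    simpa [h0, nonpos_iff_eq_zero] using hle
  · rw [if_neg h0]
    simp only [Measure.smul_apply, smul_eq_mul]
    rw [withDensity_apply _ hs, ← lintegral_indicator hs, ← mul_assoc,
      ENNReal.mul_inv_cancel h0 hx, one_mul]

lemma ae_ne_top_of_lintegral_ne_top {ν : Measure E} {f : E → ℝ≥0∞}
    (hf : Measurable f) (h : ∫⁻ x, f x ∂ν ≠ ∞) : ν {x | f x = ∞} = 0 := by
  have := ae_lt_top hf h
  rw [ae_iff] at this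
  simpa only [not_lt, top_le_iff] using this

end Aux

/-- The main induction behind Proposition 3.2, stated as measure equalities. -/
lemma statement1_meas {E : Type*} [MeasurableSpace E] {n : ℕ}
    (𝓜 : FK E n) (𝓚 : Knotset E n)
    (h𝓜 : 𝓜.Reg) (h𝓚 : 𝓚.Reg) (hcompat : 𝓚.Compat 𝓜) :
    ∀ p, p < n →
      ((1 ≤ p → (𝓚.apply 𝓜).gamma p = (𝓜.gammaHat (p - 1)).bind (𝓚.R p)) ∧
       ((𝓚.apply 𝓜).gamma p).bind (𝓚.K p) = 𝓜.gamma p) := by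
  obtain ⟨hinit, hM, hG, hGtop, hG0int, hkapM⟩ := h𝓜
  obtain ⟨hR0, hRker, hKker⟩ := h𝓚
  intro p
  induction p with
  | zero =>
    intro hn
    refine ⟨fun h => by omega, ?_⟩
    show 𝓚.R0.bind (𝓚.K 0) = 𝓜.init
    exact hcompat.1
  | succ p ih =>
    intro hsn
    have hpn : p < n := by omega
    obtain ⟨ihform, ihbind⟩ := ih hpn
    have hKp : Measurable (𝓚.K p) := (hKker p hpn).1
    have hGp : Measurable (𝓜.G p) := hG p (by omega)
    have hRp1 : Measurable (𝓚.R (p + 1)) := (hRker (p + 1) (by omega) hsn).1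
    have hKp1 : Measurable (𝓚.K (p + 1)) := (hKker (p + 1) hsn).1
    -- a.e. finiteness of `kap (K p) (G p)` w.r.t. `γ*_p`
    have hae : ∀ᵐ x ∂((𝓚.apply 𝓜).gamma p), kap (𝓚.K p) (𝓜.G p) x ≠ ∞ := by
      have hSmeas : MeasurableSet {x | kap (𝓚.K p) (𝓜.G p) x = ∞} :=
        (measurable_kap hKp hGp) (measurableSet_singleton ∞)
      rw [ae_iff]
      simp only [not_not]
      rcases Nat.eq_zero_or_pos p with hp0 | hp1
      · subst hp0
        have hg0 : (𝓚.apply 𝓜).gamma 0 = 𝓚.R0 := rfl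
        rw [hg0]
        have hint : ∫⁻ x, kap (𝓚.K 0) (𝓜.G 0) x ∂𝓚.R0 ≠ ∞ := by
          rw [show (∫⁻ x, kap (𝓚.K 0) (𝓜.G 0) x ∂𝓚.R0)
              = ∫⁻ y, 𝓜.G 0 y ∂(𝓚.R0.bind (𝓚.K 0)) from
            (Measure.lintegral_bind hKp.aemeasurable hGp.aemeasurable).symm, hcompat.1]
          exact hG0int
        exact ae_ne_top_of_lintegral_ne_top (measurable_kap hKp hGp) hint
      · have hRp : Measurable (𝓚.R p) := (hRker p hp1 hpn).1
        rw [ihform hp1, Measure.bind_apply hSmeas hRp.aemeasurable]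
        have hz : ∀ x, (𝓚.R p) x {y | kap (𝓚.K p) (𝓜.G p) y = ∞} = 0 := by
          intro x
          have hfin : ∫⁻ y, kap (𝓚.K p) (𝓜.G p) y ∂(𝓚.R p x) ≠ ∞ := by
            rw [← kap_kcomp hKp hGp x, hcompat.2 p hp1 hpn]
            exact hkapM p x hp1 (by omega)
          exact ae_ne_top_of_lintegral_ne_top (measurable_kap hKp hGp) hfin
        simp [hz]
    -- unfold one step of `gamma` for the knot-model
    have hGstar : (𝓚.apply 𝓜).G p = kap (𝓚.K p) (𝓜.G p) := by
      simp [Knotset.apply, hpn]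
    have hMstar : (𝓚.apply 𝓜).M (p + 1)
        = kcomp (twist (𝓚.K p) (𝓜.G p)) (𝓚.R (p + 1)) := by
      simp [Knotset.apply, hsn]
    have hstep : (𝓚.apply 𝓜).gamma (p + 1)
        = (𝓜.gammaHat p).bind (𝓚.R (p + 1)) := by
      show (((𝓚.apply 𝓜).gamma p).withDensity ((𝓚.apply 𝓜).G p)).bind
          ((𝓚.apply 𝓜).M (p + 1)) = _
      rw [hGstar, hMstar]
      have hb : (((𝓚.apply 𝓜).gamma p).withDensity (kap (𝓚.K p) (𝓜.G p))).bind
            (kcomp (twist (𝓚.K p) (𝓜.G p)) (𝓚.R (p + 1)))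
          = ((((𝓚.apply 𝓜).gamma p).withDensity (kap (𝓚.K p) (𝓜.G p))).bind
              (twist (𝓚.K p) (𝓜.G p))).bind (𝓚.R (p + 1)) :=
        (Measure.bind_bind (measurable_twist hKp hGp).aemeasurable hRp1.aemeasurable).symm
      rw [hb, withDensity_kap_bind_twist hKp hGp hae, ihbind]
      rfl
    refine ⟨fun _ => by simpa using hstep, ?_⟩
    rw [hstep, Measure.bind_bind hRp1.aemeasurable hKp1.aemeasurable]
    have : (fun a => (𝓚.R (p + 1) a).bind (𝓚.K (p + 1))) = 𝓜.M (p + 1) :=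
      hcompat.2 (p + 1) (by omega) hsn
    rw [this]
    rfl

/-- Proposition 3.2, knot-model predictive measures: for a knotset
`K` compatible with `M` and `M* = K ∗ M`, for every measurable `φ`:
(1) `γ*_0(φ) = R_0(φ)` and `γ*_p(φ) = (γ̂_{p-1} R_p)(φ)` for `p ∈ {1,…,n-1}`;
(2) `(γ*_p K_p)(φ) = γ_p(φ)` for `p ∈ {0,…,n-1}`. -/
theorem statement1 {E : Type*} [MeasurableSpace E] {n : ℕ} (hn : 1 ≤ n)
    (𝓜 : FK E n) (𝓚 : Knotset E n)
    (h𝓜 : 𝓜.Reg) (h𝓚 : 𝓚.Reg) (hcompat : 𝓚.Compat 𝓜) :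
    ∀ φ : E → ℝ≥0∞, Measurable φ →
      ((∫⁻ x, φ x ∂((𝓚.apply 𝓜).gamma 0) = ∫⁻ x, φ x ∂𝓚.R0) ∧
       (∀ p, 1 ≤ p → p ≤ n - 1 →
         ∫⁻ x, φ x ∂((𝓚.apply 𝓜).gamma p)
           = ∫⁻ x, φ x ∂((𝓜.gammaHat (p - 1)).bind (𝓚.R p)))) ∧
      (∀ p, p ≤ n - 1 →
         ∫⁻ x, φ x ∂(((𝓚.apply 𝓜).gamma p).bind (𝓚.K p)) = ∫⁻ x, φ x ∂(𝓜.gamma p)) := by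
  have key := statement1_meas 𝓜 𝓚 h𝓜 h𝓚 hcompat
  intro φ _
  refine ⟨⟨rfl, ?_⟩, ?_⟩
  · intro p hp1 hp
    rw [(key p (by omega)).1 hp1]
  · intro p hp
    rw [(key p (by omega)).2]

end KnotsPaper
end
end

section
/- Let R be a Markov kernel from (X,𝒳) to (Y,𝒴), K a Markov kernel from (Y,𝒴) to (Z,𝒵), and H : Z → [0,∞) a nonnegative measurable function such that H is integrable w.r.t. K(y,·) for all y and K(H) is integrable w.r.t. R(x,·) for all x. Then the composition of twisted kernels satisfies R^{K(H)} K^H (x,·) = (RK)^H (x,·) for every x ∈ X; in particular R^{K(H)} K^H = (RK)^H λ-a.e. for any measure λ on (X,𝒳). -/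
open MeasureTheory
open scoped ENNReal

noncomputable section

namespace KnotsPaper


lemma measurable_kap_aux {α β : Type*} [MeasurableSpace α] [MeasurableSpace β]
    {K : α → Measure β} (hK : Measurable K) {H : β → ℝ≥0∞}
    (hH : Measurable H) : Measurable (kap K H) :=
  (Measure.measurable_lintegral hH).comp hK

lemma measurable_twist_coe_aux {α β : Type*} [MeasurableSpace α] [MeasurableSpace β]
    {K : α → Measure β} (hK : Measurable K) {H : β → ℝ≥0∞}
    (hH : Measurable H) {s : Set β} (hs : MeasurableSet s) :
    Measurable fun x => twist K H x s := by
  have h1 : Measurable fun x => K x s := (Measure.measurable_coe hs).comp hK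
  have h2 : Measurable fun x => (kap K H x)⁻¹ * ((K x).withDensity H) s := by
    apply (measurable_kap_aux hK hH).inv.mul
    simp_rw [withDensity_apply H hs, ← lintegral_indicator hs]
    exact (Measure.measurable_lintegral (hH.indicator hs)).comp hK
  have hc : MeasurableSet {x | kap K H x = 0} :=
    (measurable_kap_aux hK hH) (measurableSet_singleton 0)
  simpa [twist, apply_ite (fun μ : Measure β => μ s), Measure.smul_apply, smul_eq_mul] using
    Measurable.ite hc h1 h2

lemma measurable_twist_aux {α β : Type*} [MeasurableSpace α] [MeasurableSpace β]
    {K : α → Measure β} (hK : Measurable K) {H : β → ℝ≥0∞}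
    (hH : Measurable H) : Measurable (twist K H) :=
  Measure.measurable_of_measurable_coe _ fun _ hs => measurable_twist_coe_aux hK hH hs

/-- Proposition B.3, twisting kernels equivalence: for Markov
kernels `R : X ⇝ Y` and `K : Y ⇝ Z` and a nonnegative measurable `H : Z → [0,∞)` with
`H` integrable w.r.t. `K(y,·)` for all `y` and `K(H)` integrable w.r.t. `R(x,·)` for
all `x`, the composition of twisted kernels satisfies
`R^{K(H)} K^H (x,·) = (RK)^H (x,·)` for every `x`; in particular
`R^{K(H)} K^H = (RK)^H` holds `λ`-a.e. for any measure `λ`. -/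
theorem statement19 {X Y Z : Type*}
    [MeasurableSpace X] [MeasurableSpace Y] [MeasurableSpace Z]
    (R : X → Measure Y) (hRm : Measurable R) (hRp : ∀ x, IsProbabilityMeasure (R x))
    (K : Y → Measure Z) (hKm : Measurable K) (hKp : ∀ y, IsProbabilityMeasure (K y))
    (H : Z → ℝ≥0∞) (hHm : Measurable H) (hHfin : ∀ z, H z ≠ ∞)
    (hHint : ∀ y, kap K H y ≠ ∞)
    (hKHint : ∀ x, (∫⁻ y, kap K H y ∂(R x)) ≠ ∞) :
    (∀ x : X, kcomp (twist R (kap K H)) (twist K H) x = twist (kcomp R K) H x) ∧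
    (∀ lam : Measure X,
      ∀ᵐ x ∂lam,
        kcomp (twist R (kap K H)) (twist K H) x = twist (kcomp R K) H x) := by
  have hkap : Measurable (kap K H) := measurable_kap_aux hKm hHm
  have htw : Measurable (twist K H) := measurable_twist_aux hKm hHm
  have hRK : ∀ x, kap (kcomp R K) H x = kap R (kap K H) x := by
    intro x
    simp only [kap, kcomp]
    rw [Measure.lintegral_bind hKm.aemeasurable hHm.aemeasurable]
  have main : ∀ x : X, kcomp (twist R (kap K H)) (twist K H) x = twist (kcomp R K) H x := by
    intro x
    by_cases h0 : kap R (kap K H) x = 0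
    · have h0' : kap (kcomp R K) H x = 0 := (hRK x).trans h0
      have hae : ∀ᵐ y ∂(R x), kap K H y = 0 := (lintegral_eq_zero_iff hkap).mp h0
      have h1 : twist (kcomp R K) H x = kcomp R K x := by simp [twist, h0']
      have h2 : twist R (kap K H) x = R x := by simp [twist, h0]
      rw [h1]
      show ((twist R (kap K H)) x).bind (twist K H) = (R x).bind K
      rw [h2]
      ext s hs
      rw [Measure.bind_apply hs htw.aemeasurable, Measure.bind_apply hs hKm.aemeasurable]
      refine lintegral_congr_ae (hae.mono fun y hy => ?_)
      simp [twist, hy]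
    · have hfin : kap R (kap K H) x ≠ ∞ := hKHint x
      have h0' : kap (kcomp R K) H x ≠ 0 := by rw [hRK x]; exact h0
      have ht1 : twist R (kap K H) x = (kap R (kap K H) x)⁻¹ • (R x).withDensity (kap K H) := by
        simp [twist, h0]
      have ht2 : twist (kcomp R K) H x
          = (kap R (kap K H) x)⁻¹ • (kcomp R K x).withDensity H := by
        simp only [twist, hRK x]; rw [if_neg h0]
      ext s hs
      show ((twist R (kap K H)) x).bind (twist K H) s = _
      rw [Measure.bind_apply hs htw.aemeasurable, ht1, ht2, lintegral_smul_measure,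
        lintegral_withDensity_eq_lintegral_mul (R x) hkap (measurable_twist_coe_aux hKm hHm hs)]
      have hpt : ∫⁻ y, (kap K H * fun y => twist K H y s) y ∂(R x)
          = ∫⁻ y, ∫⁻ z in s, H z ∂(K y) ∂(R x) := by
        refine lintegral_congr fun y => ?_
        by_cases hy : kap K H y = 0
        · have hz : ∫⁻ z in s, H z ∂(K y) = 0 :=
            le_antisymm (le_trans (setLIntegral_le_lintegral s H) (le_of_eq hy)) zero_le
          simp [twist, hy, hz]
        · simp only [Pi.mul_apply, twist, if_neg hy, Measure.smul_apply, smul_eq_mul,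
            withDensity_apply H hs, ← mul_assoc, ENNReal.mul_inv_cancel hy (hHint y), one_mul]
      rw [hpt]
      have hrhs : ((kcomp R K x).withDensity H) s = ∫⁻ y, ∫⁻ z in s, H z ∂(K y) ∂(R x) := by
        rw [withDensity_apply H hs]
        simp only [kcomp]
        rw [← lintegral_indicator hs, Measure.lintegral_bind hKm.aemeasurable (hHm.indicator hs).aemeasurable]
        simp_rw [lintegral_indicator hs]
      rw [Measure.smul_apply, smul_eq_mul, hrhs, smul_eq_mul]
  exact ⟨main, fun lam => Filter.Eventually.of_forall main⟩

end KnotsPaper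
end
end
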